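/- arXiv:1703.00422 — 4 statements merged into one kernel-verified Lean document; each statement's English description precedes it below -/
import Mathlib

section
/- Suppose the continuous linear map A : E × ℂ → F × ℂ defined by A(φ, a) = (Sφ + a•c, ℓφ) is bijective. Then the linear subspace 𝒞 := {φ ∈ E : ∃ α ∈ ℂ, Sφ = α•c} of E is one-dimensional, i.e. finrank_ℂ 𝒞 = 1. -/
/-- If the continuous linear map `A : E × ℂ → F × ℂ`, `A(φ, a) = (Sφ + a•c, ℓφ)`, is
bijective, then the subspace `𝒞 = {φ : ∃ α, Sφ = α•c}` of `E` is one-dimensional. -/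
theorem stmt_0
    {E F : Type*} [NormedAddCommGroup E] [NormedSpace ℂ E] [CompleteSpace E]
    [NormedAddCommGroup F] [NormedSpace ℂ F] [CompleteSpace F]
    (S : E →L[ℂ] F) (ℓ : E →L[ℂ] ℂ) (c : F)
    (A : (E × ℂ) →L[ℂ] (F × ℂ))
    (hA : ∀ (φ : E) (a : ℂ), A (φ, a) = (S φ + a • c, ℓ φ))
    (hbij : Function.Bijective A)
    (𝒞 : Submodule ℂ E)
    (h𝒞 : ∀ φ : E, φ ∈ 𝒞 ↔ ∃ α : ℂ, S φ = α • c) :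
    Module.finrank ℂ 𝒞 = 1 := by
  obtain ⟨⟨φ₀, a₀⟩, h₀⟩ := hbij.2 (0, 1)
  rw [hA] at h₀
  have hS0 : S φ₀ + a₀ • c = 0 := congrArg Prod.fst h₀
  have hl0 : ℓ φ₀ = 1 := congrArg Prod.snd h₀
  have hφ₀ne : φ₀ ≠ 0 := by
    intro h
    rw [h, map_zero] at hl0
    exact zero_ne_one hl0
  have hspan : 𝒞 = Submodule.span ℂ {φ₀} := by
    apply le_antisymm
    · intro φ hφ
      obtain ⟨α, hα⟩ := (h𝒞 φ).1 hφ
      have key : A (φ, -α) = A (ℓ φ • φ₀, ℓ φ • a₀) := by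
        rw [hA, hA, hα]
        refine Prod.ext ?_ ?_
        · show α • c + (-α) • c = S (ℓ φ • φ₀) + (ℓ φ • a₀) • c
          rw [map_smul, smul_eq_mul, mul_smul, ← smul_add, hS0, smul_zero,
            neg_smul, add_neg_cancel]
        · show ℓ φ = ℓ (ℓ φ • φ₀)
          rw [map_smul, smul_eq_mul, hl0, mul_one]
      have heq := hbij.1 key
      have hφeq : φ = ℓ φ • φ₀ := congrArg Prod.fst heq
      rw [hφeq]
      exact Submodule.smul_mem _ _ (Submodule.mem_span_singleton_self φ₀)
    · rw [Submodule.span_le, Set.singleton_subset_iff]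
      refine (h𝒞 φ₀).2 ⟨-a₀, ?_⟩
      rw [neg_smul, eq_neg_iff_add_eq_zero]
      exact hS0
  rw [hspan, finrank_span_singleton hφ₀ne]
end

section
/- The modified operator S̃ : E → F defined by S̃φ := S(φ − (ℓφ)•φ₀) − (ℓφ)•c is bijective. -/
open Metric Filter

/-- Rank-one operators are compact. -/
lemma aux_rank_one_compact {E F : Type*} [NormedAddCommGroup E] [NormedSpace ℂ E]
    [NormedAddCommGroup F] [NormedSpace ℂ F] (ℓ : E →L[ℂ] ℂ) (v : F) :
    IsCompactOperator (fun φ : E => ℓ φ • v) := by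
  refine ⟨(fun z : ℂ => z • v) '' Metric.closedBall 0 1,
    (isCompact_closedBall 0 1).image (by continuity), ?_⟩
  have h1 : ℓ ⁻¹' (Metric.closedBall 0 1) ∈ nhds (0 : E) :=
    ℓ.continuous.continuousAt.preimage_mem_nhds (by simpa using Metric.closedBall_mem_nhds (0:ℂ) one_pos)
  refine Filter.mem_of_superset h1 ?_
  intro x hx
  exact ⟨ℓ x, hx, rfl⟩

/-- If `1 - A` is injective with `A` compact, then `1 - A` is bounded below. -/
lemma aux_bounded_below {E : Type*} [NormedAddCommGroup E] [NormedSpace ℂ E]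
    (A : E →L[ℂ] E) (hA : IsCompactOperator (⇑A))
    (hinj : Function.Injective ⇑(1 - A)) :
    ∃ c > (0:ℝ), ∀ x : E, c * ‖x‖ ≤ ‖(1 - A) x‖ := by
  by_contra h
  push_neg at h
  choose x hx using fun n : ℕ => h ((n+1:ℝ)⁻¹) (by positivity)
  have hxne : ∀ n, x n ≠ 0 := by
    intro n hn
    have := hx n
    rw [hn] at this
    simp at this
  set u : ℕ → E := fun n => ((‖x n‖⁻¹ : ℝ) : ℂ) • x n with hu
  have hu1 : ∀ n, ‖u n‖ = 1 := by
    intro n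
    have hne : ‖x n‖ ≠ 0 := norm_ne_zero_iff.mpr (hxne n)
    simp [hu, norm_smul, Real.norm_eq_abs, abs_of_nonneg (inv_nonneg.mpr (norm_nonneg _)),
      inv_mul_cancel₀ hne]
  have hfu : ∀ n, ‖(1 - A) (u n)‖ < (n+1:ℝ)⁻¹ := by
    intro n
    have hpos : (0:ℝ) < ‖x n‖⁻¹ := inv_pos.mpr (norm_pos_iff.mpr (hxne n))
    have : (1 - A) (u n) = ((‖x n‖⁻¹ : ℝ) : ℂ) • ((1 - A) (x n)) := by
      rw [hu]; exact map_smul _ _ _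
    rw [this, norm_smul]
    have h2 : ‖((‖x n‖⁻¹ : ℝ) : ℂ)‖ = ‖x n‖⁻¹ := by
      simp [Real.norm_eq_abs, abs_of_nonneg (inv_nonneg.mpr (norm_nonneg _))]
    rw [h2]
    calc ‖x n‖⁻¹ * ‖(1 - A) (x n)‖ < ‖x n‖⁻¹ * ((n+1:ℝ)⁻¹ * ‖x n‖) :=
          mul_lt_mul_of_pos_left (hx n) hpos
      _ = (n+1:ℝ)⁻¹ := by
          have hne : ‖x n‖ ≠ 0 := norm_ne_zero_iff.mpr (hxne n)
          have hn1 : ((n:ℝ)+1) ≠ 0 := by positivity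
          field_simp
  obtain ⟨Kc, hKc, hKsub⟩ := hA.image_closedBall_subset_compact (f := (A : E →ₗ[ℂ] E)) 1
  have hmem : ∀ n, A (u n) ∈ Kc := by
    intro n
    exact hKsub ⟨u n, by simp [Metric.mem_closedBall, hu1 n], rfl⟩
  obtain ⟨a, -, g, hg, hag⟩ := hKc.tendsto_subseq hmem
  have htend0 : Tendsto (fun n => (1 - A) (u n)) atTop (nhds 0) := by
    refine tendsto_zero_iff_norm_tendsto_zero.2 ?_
    refine squeeze_zero (fun n => norm_nonneg _) (fun n => le_of_lt (hfu n)) ?_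
    simpa [one_div] using tendsto_one_div_add_atTop_nhds_zero_nat (𝕜 := ℝ)
  have htendu : Tendsto (fun n => u (g n)) atTop (nhds a) := by
    have heq : (fun n => u (g n)) = fun n => (1 - A) (u (g n)) + A (u (g n)) := by
      funext n
      simp [ContinuousLinearMap.sub_apply, ContinuousLinearMap.one_apply]
    rw [heq]
    have := (htend0.comp hg.tendsto_atTop).add hag
    simpa using this
  have ha1 : ‖a‖ = 1 := by
    have h1 : Tendsto (fun n => ‖u (g n)‖) atTop (nhds ‖a‖) := htendu.norm
    have h2 : Tendsto (fun n : ℕ => (1:ℝ)) atTop (nhds 1) := tendsto_const_nhds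
    have : (fun n => ‖u (g n)‖) = fun _ : ℕ => (1:ℝ) := funext fun n => hu1 (g n)
    rw [this] at h1
    exact tendsto_nhds_unique h1 h2
  have hfa : (1 - A) a = 0 :=
    tendsto_nhds_unique (((1 - A).continuous.tendsto a).comp htendu)
      (htend0.comp hg.tendsto_atTop)
  have : a = 0 := hinj (by rw [hfa, map_zero])
  rw [this] at ha1
  simp at ha1

/-- Riesz-type selection: a unit vector in `H` at distance `≥ 1/2` from a proper
closed subspace `G ≤ H`. -/
lemma aux_riesz_select {E : Type*} [NormedAddCommGroup E] [NormedSpace ℂ E]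
    {G H : Submodule ℂ E} (hG : IsClosed (G : Set E)) (hGH : G ≤ H)
    {z : E} (hzH : z ∈ H) (hz : z ∉ G) :
    ∃ x ∈ H, ‖x‖ = 1 ∧ ∀ y ∈ G, (1:ℝ)/2 ≤ ‖x - y‖ := by
  have hne : (G : Set E).Nonempty := ⟨0, G.zero_mem⟩
  have hd : 0 < Metric.infDist z (G : Set E) :=
    (hG.notMem_iff_infDist_pos hne).mp hz
  set d := Metric.infDist z (G : Set E) with hdd
  obtain ⟨y₀, hy₀G, hy₀⟩ := (Metric.infDist_lt_iff hne).mp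
    (show d < 2 * d by linarith)
  set w := z - y₀ with hw
  have hwd : d ≤ ‖w‖ := by
    have h1 : d ≤ dist z y₀ := Metric.infDist_le_dist_of_mem hy₀G
    rwa [dist_eq_norm] at h1
  have hwpos : 0 < ‖w‖ := lt_of_lt_of_le hd hwd
  have hwlt : ‖w‖ < 2 * d := by
    rwa [hw, ← dist_eq_norm]
  refine ⟨((‖w‖⁻¹ : ℝ) : ℂ) • w, ?_, ?_, ?_⟩
  · exact Submodule.smul_mem _ _ (H.sub_mem hzH (hGH hy₀G))
  · simp [norm_smul, Real.norm_eq_abs, abs_of_nonneg (inv_nonneg.mpr (norm_nonneg _)),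
      inv_mul_cancel₀ (ne_of_gt hwpos)]
  · intro y hyG
    have hcancel : ((‖w‖⁻¹ : ℝ) : ℂ) • (((‖w‖ : ℝ) : ℂ) • y) = y := by
      rw [smul_smul, ← Complex.ofReal_mul, inv_mul_cancel₀ (ne_of_gt hwpos),
        Complex.ofReal_one, one_smul]
    have hkey : ((‖w‖⁻¹ : ℝ) : ℂ) • w - y = ((‖w‖⁻¹ : ℝ) : ℂ) • (w - ((‖w‖ : ℝ) : ℂ) • y) := by
      simp only [smul_sub, hcancel]
    rw [hkey, norm_smul]
    have h2 : ‖((‖w‖⁻¹ : ℝ) : ℂ)‖ = ‖w‖⁻¹ := by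
      simp [Real.norm_eq_abs, abs_of_nonneg (inv_nonneg.mpr (norm_nonneg _))]
    rw [h2]
    have hyG' : y₀ + ((‖w‖ : ℝ) : ℂ) • y ∈ G := G.add_mem hy₀G (G.smul_mem _ hyG)
    have h3 : d ≤ ‖w - ((‖w‖ : ℝ) : ℂ) • y‖ := by
      have : w - ((‖w‖ : ℝ) : ℂ) • y = z - (y₀ + ((‖w‖ : ℝ) : ℂ) • y) := by
        rw [hw]; abel
      rw [this, ← dist_eq_norm]
      exact Metric.infDist_le_dist_of_mem hyG'
    have h4 : (1:ℝ)/2 < ‖w‖⁻¹ * d := by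
      rw [lt_inv_mul_iff₀ hwpos]
      linarith
    refine le_of_lt ?_
    calc (1:ℝ)/2 < ‖w‖⁻¹ * d := h4
      _ ≤ ‖w‖⁻¹ * ‖w - ((‖w‖ : ℝ) : ℂ) • y‖ :=
          mul_le_mul_of_nonneg_left h3 (inv_nonneg.mpr (norm_nonneg _))

/-- Riesz theory: if `A` is compact and `1 - A` injective, then `1 - A` is surjective. -/
lemma aux_riesz_surjective {E : Type*} [NormedAddCommGroup E] [NormedSpace ℂ E]
    [CompleteSpace E] (A : E →L[ℂ] E) (hA : IsCompactOperator (⇑A))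
    (hinj : Function.Injective ⇑(1 - A)) :
    Function.Surjective ⇑(1 - A) := by
  by_contra hns
  rw [Function.Surjective] at hns
  push_neg at hns
  obtain ⟨z, hnz⟩ := hns
  obtain ⟨c, hc0, hcb⟩ := aux_bounded_below A hA hinj
  set f : E →L[ℂ] E := 1 - A with hf
  -- powers are injective
  have hpowinj : ∀ n : ℕ, Function.Injective ⇑(f ^ n) := by
    intro n
    induction n with
    | zero => simpa using Function.injective_id
    | succ n ih =>
      intro a b hab
      have h1 : (f ^ n) (f a) = (f ^ n) (f b) := by
        simpa [pow_succ, ContinuousLinearMap.mul_apply] using hab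
      exact hinj (ih h1)
  -- powers are bounded below
  have hpowbb : ∀ n : ℕ, ∀ x : E, c ^ n * ‖x‖ ≤ ‖(f ^ n) x‖ := by
    intro n
    induction n with
    | zero => intro x; simp
    | succ n ih =>
      intro x
      calc c ^ (n+1) * ‖x‖ = c ^ n * (c * ‖x‖) := by ring
        _ ≤ c ^ n * ‖f x‖ :=
            mul_le_mul_of_nonneg_left (hcb x) (pow_nonneg (le_of_lt hc0) n)
        _ ≤ ‖(f ^ n) (f x)‖ := ih (f x)
        _ = ‖(f ^ (n+1)) x‖ := by rw [pow_succ, ContinuousLinearMap.mul_apply]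
  -- ranges of powers
  set R : ℕ → Submodule ℂ E := fun n => LinearMap.range ((f ^ n : E →L[ℂ] E) : E →ₗ[ℂ] E) with hR
  have hclosed : ∀ n, IsClosed ((R n : Submodule ℂ E) : Set E) := by
    intro n
    have hcpos : (0:ℝ) < c ^ n := pow_pos hc0 n
    have hanti : AntilipschitzWith ⟨(c ^ n)⁻¹, by positivity⟩ ⇑(f ^ n) := by
      refine AntilipschitzWith.of_le_mul_dist ?_
      intro x y
      rw [dist_eq_norm, dist_eq_norm, ← map_sub]
      have h1 := hpowbb n (x - y)
      calc ‖x - y‖ = (c ^ n)⁻¹ * (c ^ n * ‖x - y‖) := by field_simp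
        _ ≤ (c ^ n)⁻¹ * ‖(f ^ n) (x - y)‖ :=
            mul_le_mul_of_nonneg_left h1 (inv_nonneg.mpr (le_of_lt hcpos))
        _ = ((⟨(c ^ n)⁻¹, by positivity⟩ : NNReal) : ℝ) * ‖(f ^ n) (x - y)‖ := by norm_num
    have := hanti.isClosed_range (f ^ n).uniformContinuous
    change IsClosed (Set.range ⇑(f ^ n)); exact this
  have hRle : ∀ m n : ℕ, m ≤ n → R n ≤ R m := by
    intro m n hmn
    obtain ⟨k, rfl⟩ := Nat.exists_eq_add_of_le hmn
    rintro y ⟨w, rfl⟩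
    exact ⟨(f ^ k) w, by rw [pow_add]; rfl⟩
  have hmemRn : ∀ n, (f ^ n) z ∈ R n := fun n => ⟨z, rfl⟩
  have hznot : ∀ n, (f ^ n) z ∉ R (n + 1) := by
    rintro n ⟨w, hw⟩
    have hw' : (f ^ n) (f w) = (f ^ n) z := by
      rw [← ContinuousLinearMap.mul_apply, ← pow_succ]; exact hw
    exact hnz w (hpowinj n hw')
  -- Riesz selection
  have hsel : ∀ n, ∃ x ∈ R n, ‖x‖ = 1 ∧ ∀ y ∈ R (n+1), (1:ℝ)/2 ≤ ‖x - y‖ := fun n =>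
    aux_riesz_select (hclosed (n+1)) (hRle n (n+1) (Nat.le_succ n)) (hmemRn n) (hznot n)
  choose u huR hu1 husep using hsel
  have hfR : ∀ (k : ℕ) (x : E), x ∈ R k → f x ∈ R (k + 1) := by
    rintro k x ⟨t, rfl⟩
    exact ⟨t, by rw [pow_succ']; rfl⟩
  -- separation of images under A
  have hsep : ∀ m n : ℕ, m < n → (1:ℝ)/2 ≤ ‖A (u m) - A (u n)‖ := by
    intro m n hmn
    set y := f (u m) + u n - f (u n) with hy
    have hyR : y ∈ R (m + 1) := by
      refine (R (m+1)).sub_mem ((R (m+1)).add_mem (hfR m (u m) (huR m)) ?_) ?_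
      · exact hRle (m+1) n hmn (huR n)
      · exact hRle (m+1) (n+1) (by omega) (hfR n (u n) (huR n))
    have hkey : A (u m) - A (u n) = u m - y := by
      rw [hy, hf]
      simp [ContinuousLinearMap.sub_apply, ContinuousLinearMap.one_apply]
      abel
    rw [hkey]
    exact husep m y hyR
  -- compactness contradiction
  obtain ⟨Kc, hKc, hKsub⟩ := hA.image_closedBall_subset_compact (f := (A : E →ₗ[ℂ] E)) 1
  have hmem : ∀ n, A (u n) ∈ Kc := fun n =>
    hKsub ⟨u n, by simp [Metric.mem_closedBall, hu1 n], rfl⟩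
  obtain ⟨a, -, g, hg, hag⟩ := hKc.tendsto_subseq hmem
  have hcauchy := hag.cauchySeq
  rw [Metric.cauchySeq_iff] at hcauchy
  obtain ⟨N, hN⟩ := hcauchy ((1:ℝ)/2) (by norm_num)
  have h1 := hN N (le_refl N) (N+1) (Nat.le_succ N)
  have h2 : (1:ℝ)/2 ≤ dist (A (u (g N))) (A (u (g (N+1)))) := by
    rw [dist_eq_norm]
    exact hsep (g N) (g (N+1)) (hg (Nat.lt_succ_self N))
  simp only [Function.comp] at h1
  linarith

/-- The modified operator `S̃φ := S(φ − (ℓφ)•φ₀) − (ℓφ)•c` is bijective, where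
`S = T + K` with `T` invertible and `K` compact, `c ≠ 0`, `ℓφ₀ = 1` and
`{φ : ∃ α, Sφ = α•c} = ℂ•φ₀`. -/
theorem stmt_2
    {E F : Type*} [NormedAddCommGroup E] [NormedSpace ℂ E] [CompleteSpace E]
    [NormedAddCommGroup F] [NormedSpace ℂ F] [CompleteSpace F]
    (T : E ≃L[ℂ] F) (K : E →L[ℂ] F) (hK : IsCompactOperator (⇑K))
    (S : E →L[ℂ] F) (hS : ∀ φ : E, S φ = T φ + K φ)
    (ℓ : E →L[ℂ] ℂ) (c : F) (hc : c ≠ 0)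
    (φ₀ : E) (hφ₀ : ℓ φ₀ = 1)
    (hker : ∀ φ : E, (∃ α : ℂ, S φ = α • c) ↔ ∃ β : ℂ, φ = β • φ₀)
    (Stilde : E →L[ℂ] F)
    (hStilde : ∀ φ : E, Stilde φ = S (φ - ℓ φ • φ₀) - ℓ φ • c) :
    Function.Bijective Stilde := by
  -- rewrite Stilde as T + compact
  set v : F := S φ₀ + c with hv
  set K' : E →L[ℂ] F := K - ℓ.smulRight v with hK'
  have hK'c : IsCompactOperator (⇑K') := by
    have h1 : IsCompactOperator (fun φ : E => ℓ φ • v) := aux_rank_one_compact ℓ v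
    have := hK.sub h1
    have heq : (⇑K - fun φ : E => ℓ φ • v) = ⇑K' := by
      funext φ; simp [hK', ContinuousLinearMap.sub_apply]
    rwa [heq] at this
  set A : E →L[ℂ] E := -((T.symm : F →L[ℂ] E).comp K') with hA
  have hAc : IsCompactOperator (⇑A) := by
    have h1 := hK'c.clm_comp (T.symm : F →L[ℂ] E)
    have h2 : IsCompactOperator (⇑((T.symm : F →L[ℂ] E).comp K')) := by
      have heq : ⇑((T.symm : F →L[ℂ] E).comp K') = (⇑(T.symm : F →L[ℂ] E)) ∘ ⇑K' := rfl
      rwa [heq]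
    have h3 := h2.neg
    have heq : (-⇑((T.symm : F →L[ℂ] E).comp K')) = ⇑A := by
      funext x; simp [hA]
    rwa [heq] at h3
  have key : ∀ φ : E, Stilde φ = T ((1 - A) φ) := by
    intro φ
    have h1 : (1 - A) φ = φ + T.symm (K' φ) := by
      simp [hA, ContinuousLinearMap.sub_apply, ContinuousLinearMap.one_apply, sub_neg_eq_add]
    rw [h1, map_add]
    simp only [ContinuousLinearEquiv.coe_coe, ContinuousLinearEquiv.apply_symm_apply]
    rw [hStilde, map_sub, map_smul, hS]
    simp [hK', hv, ContinuousLinearMap.sub_apply, ContinuousLinearMap.smulRight_apply, smul_add]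
    abel
  -- injectivity of Stilde
  have hSt0 : ∀ φ : E, Stilde φ = 0 → φ = 0 := by
    intro φ h
    have h1 : S (φ - ℓ φ • φ₀) = ℓ φ • c := by
      rw [hStilde] at h
      exact sub_eq_zero.mp h
    obtain ⟨β, hβ⟩ := (hker _).mp ⟨ℓ φ, h1⟩
    have hβ0 : β = 0 := by
      have h2 := congrArg ℓ hβ
      simp [map_sub, map_smul, hφ₀] at h2
      -- h2 should give β = 0
      simpa using h2.symm
    rw [hβ0, zero_smul] at hβ
    have h2 : ℓ φ • c = 0 := by rw [← h1, hβ, map_zero]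
    have hl0 : ℓ φ = 0 := by
      rcases smul_eq_zero.mp h2 with h3 | h3
      · exact h3
      · exact absurd h3 hc
    have h3 := hβ
    rw [hl0, zero_smul, sub_zero] at h3
    exact h3
  have hinjSt : Function.Injective ⇑Stilde := by
    intro a b hab
    have : Stilde (a - b) = 0 := by rw [map_sub, hab, sub_self]
    exact sub_eq_zero.mp (hSt0 _ this)
  have hinj1A : Function.Injective ⇑(1 - A) := by
    intro a b h
    exact hinjSt (by rw [key, key, h])
  have hsurj1A := aux_riesz_surjective A hAc hinj1A
  refine ⟨hinjSt, ?_⟩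
  intro y
  obtain ⟨x, hx⟩ := hsurj1A (T.symm y)
  exact ⟨x, by rw [key, hx]; exact T.apply_symm_apply y⟩
end

section
/- Assume in addition that B(ψ, Sψ) < 0 for every nonzero ψ ∈ E with ℓψ = 0. Then B(φ, S̃φ) < 0 for every nonzero φ ∈ E, i.e. the modified operator S̃ is negative for the pairing B. -/
/-- If `B(ψ, Sψ) < 0` for every nonzero mean-zero `ψ`, then the modified operator
`S̃φ := S(φ − (ℓφ)•φ₀) − (ℓφ)•c` is negative for the pairing `B`:
`B(φ, S̃φ) < 0` for every nonzero `φ`. -/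
theorem stmt_4
    {E F : Type*} [NormedAddCommGroup E] [NormedSpace ℝ E] [CompleteSpace E]
    [NormedAddCommGroup F] [NormedSpace ℝ F] [CompleteSpace F]
    (S : E →L[ℝ] F) (ℓ : E →L[ℝ] ℝ) (c : F)
    (B : E →L[ℝ] F →L[ℝ] ℝ)
    (hsym : ∀ φ ψ : E, B φ (S ψ) = B ψ (S φ))
    (hBc : ∀ φ : E, B φ c = ℓ φ)
    (φ₀ : E) (α₀ : ℝ) (hφ₀ : ℓ φ₀ = 1) (hSφ₀ : S φ₀ = α₀ • c)
    (Stilde : E →L[ℝ] F)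
    (hStilde : ∀ φ : E, Stilde φ = S (φ - ℓ φ • φ₀) - ℓ φ • c)
    (hneg : ∀ ψ : E, ψ ≠ 0 → ℓ ψ = 0 → B ψ (S ψ) < 0) :
    ∀ φ : E, φ ≠ 0 → B φ (Stilde φ) < 0 := by
  intro φ hφ
  set t : ℝ := ℓ φ with ht
  set ψ : E := φ - t • φ₀ with hψ
  have hℓψ : ℓ ψ = 0 := by simp [hψ, hφ₀, ht]
  have hBφ₀Sψ : B φ₀ (S ψ) = 0 := by
    rw [hsym, hSφ₀]
    simp [hℓψ, hBc]
  have key : B φ (Stilde φ) = B ψ (S ψ) - t ^ 2 := by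
    rw [hStilde φ, ← ht, ← hψ]
    have hφeq : φ = ψ + t • φ₀ := by simp [hψ]
    rw [map_sub, hφeq]
    simp only [map_add, map_smul, ContinuousLinearMap.add_apply,
      ContinuousLinearMap.smul_apply, ContinuousLinearMap.map_smul,
      smul_eq_mul, hBφ₀Sψ, hBc, hℓψ, hφ₀]
    ring
  rw [key]
  by_cases hψ0 : ψ = 0
  · have ht0 : t ≠ 0 := by
      intro h0
      apply hφ
      have := hψ0
      rw [hψ, h0, zero_smul, sub_zero] at this
      exact this
    rw [hψ0]
    simp only [map_zero, ContinuousLinearMap.zero_apply, zero_sub, neg_neg]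
    nlinarith [sq_pos_of_ne_zero ht0]
  · have := hneg ψ hψ0 hℓψ
    nlinarith [sq_nonneg t]
end

section
/- One has the Calderón identity S̃ ∘ K* = K ∘ S̃ for the modified operator S̃. -/
/-- The Calderón identity `S̃ ∘ K* = K ∘ S̃` holds for the modified operator
`S̃φ := S(φ − (ℓφ)•φ₀) − (ℓφ)•c`, given `S ∘ K* = K ∘ S`, `K*φ₀ = (1/2)•φ₀`,
`K c = (1/2)•c` and `ℓ(K*φ) = (1/2)ℓφ`. -/
theorem stmt_5
    {E F : Type*} [NormedAddCommGroup E] [NormedSpace ℂ E] [CompleteSpace E]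
    [NormedAddCommGroup F] [NormedSpace ℂ F] [CompleteSpace F]
    (S : E →L[ℂ] F) (ℓ : E →L[ℂ] ℂ) (c : F)
    (φ₀ : E) (hφ₀ : ℓ φ₀ = 1)
    (Kstar : E →L[ℂ] E) (K : F →L[ℂ] F)
    (hcald : ∀ φ : E, S (Kstar φ) = K (S φ))
    (hKφ₀ : Kstar φ₀ = (1 / 2 : ℂ) • φ₀)
    (hKc : K c = (1 / 2 : ℂ) • c)
    (hℓK : ∀ φ : E, ℓ (Kstar φ) = (1 / 2 : ℂ) * ℓ φ)
    (Stilde : E →L[ℂ] F)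
    (hStilde : ∀ φ : E, Stilde φ = S (φ - ℓ φ • φ₀) - ℓ φ • c) :
    ∀ φ : E, Stilde (Kstar φ) = K (Stilde φ) := by
  intro φ
  have hKSφ₀ : K (S φ₀) = (1 / 2 : ℂ) • S φ₀ := by
    rw [← hcald, hKφ₀, map_smul]
  rw [hStilde, hStilde, hℓK]
  simp only [map_sub, map_smul, hcald, hKφ₀, hKc, hKSφ₀, smul_smul]
  module
end
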